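/- Bias of the joint-throttling estimator for a quota treatment in a simple model: consider one advertiser with quota Q and N eligible queries (Q < N), each query having fixed value v > 0 to the exchange if served. Under joint throttling the advertiser always serves exactly Q queries regardless of the treatment assignment, so total realized revenue is Q·v for every assignment Z; hence for a quota treatment whose true effect τ* may be nonzero, the Horvitz–Thompson estimator based on realized revenues has expectation E[τ̂] whose value, under balanced query randomization with p = 1/2 and symmetric random throttling, equals 0. In particular the relative bias E[τ̂]/τ* − 1 equals −1 whenever τ* ≠ 0. -/

import Mathlib

lemma sum_zero_aux (N Q : ℕ) (v : ℝ) :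
    (∑ Z : Fin N → Bool,
        ∑ S ∈ Finset.powersetCard Q (Finset.univ : Finset (Fin N)),
          (2 * v * ((S.filter (fun i => Z i = true)).card : ℝ)
           - 2 * v * ((S.filter (fun i => Z i = false)).card : ℝ))) = 0 := by
  set F : (Fin N → Bool) → ℝ := fun Z =>
    ∑ S ∈ Finset.powersetCard Q (Finset.univ : Finset (Fin N)),
      (2 * v * ((S.filter (fun i => Z i = true)).card : ℝ)
       - 2 * v * ((S.filter (fun i => Z i = false)).card : ℝ)) with hF
  have key : ∀ Z, F (fun i => !Z i) = -F Z := by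
    intro Z
    rw [hF]
    simp only [← Finset.sum_neg_distrib]
    refine Finset.sum_congr rfl fun S _ => ?_
    have h1 : S.filter (fun i => (!Z i) = true) = S.filter (fun i => Z i = false) := by
      apply Finset.filter_congr; intro i _; simp
    have h2 : S.filter (fun i => (!Z i) = false) = S.filter (fun i => Z i = true) := by
      apply Finset.filter_congr; intro i _; simp
    rw [h1, h2]; ring
  have e : (∑ Z : Fin N → Bool, F Z) = ∑ Z : Fin N → Bool, F (fun i => !Z i) :=
    (Fintype.sum_bijective (fun Z : Fin N → Bool => fun i => !Z i)
      (Function.Involutive.bijective (fun Z => by funext i; simp)) _ _ (fun Z => rfl)).symm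
  have h2 : (∑ Z : Fin N → Bool, F (fun i => !Z i)) = -∑ Z : Fin N → Bool, F Z := by
    simp only [key]
    exact Finset.sum_neg_distrib F
  rw [h2] at e
  linarith


/- Joint throttling with a quota treatment, symmetric model: one advertiser with
quota Q < N serves a uniformly random Q-subset S of its N queries, each query worth
v > 0 if served; Z assigns each query independently to treatment or control with
probability 1/2.  The realized HT estimator is τ̂(Z,S) = 2v·|S ∩ treated| −
2v·|S ∩ control|.  By symmetry E[τ̂] = 0, so whenever the true quota-treatment
effect τ* is nonzero, the relative bias E[τ̂]/τ* − 1 equals −1. -/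
theorem stmt11 (N Q : ℕ) (hQN : Q < N) (v : ℝ) (hv : 0 < v) :
    (∑ Z : Fin N → Bool,
        ∑ S ∈ Finset.powersetCard Q (Finset.univ : Finset (Fin N)),
          (2 * v * ((S.filter (fun i => Z i = true)).card : ℝ)
           - 2 * v * ((S.filter (fun i => Z i = false)).card : ℝ)))
      / ((2 ^ N : ℝ) * ((Finset.powersetCard Q (Finset.univ : Finset (Fin N))).card : ℝ))
      = 0 ∧
    ∀ τstar : ℝ, τstar ≠ 0 →
      (∑ Z : Fin N → Bool,
          ∑ S ∈ Finset.powersetCard Q (Finset.univ : Finset (Fin N)),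
            (2 * v * ((S.filter (fun i => Z i = true)).card : ℝ)
             - 2 * v * ((S.filter (fun i => Z i = false)).card : ℝ)))
        / ((2 ^ N : ℝ) * ((Finset.powersetCard Q (Finset.univ : Finset (Fin N))).card : ℝ))
        / τstar - 1 = -1 := by
  rw [sum_zero_aux N Q v]
  simp
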